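/- Let each entry be independently positive with probability π, set ξ = π/(1−π) and λ = m/n, and let μ_+ (resp. μ_−) be the conditional database distribution given that the critical entry is positive (resp. negative). Then the subsampled count satisfies P[a_{F,m} = j/m | μ_+] = λ·C(m−1, j−1)·π^{j−1}(1−π)^{m−j} + (1−λ)·C(m, j)·π^j(1−π)^{m−j} and P[a_{F,m} = j/m | μ_−] = λ·C(m−1, j)·π^j(1−π)^{m−j−1} + (1−λ)·C(m, j)·π^j(1−π)^{m−j}, and the ratio of these two probabilities equals Q_+(j) = (λ·j + (1−λ)·m·π) / (λ·(m−j)·ξ + (1−λ)·m·π). -/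

import Mathlib

open MeasureTheory

private lemma binom_map_singleton (π : ℝ) (hπ0 : 0 ≤ π) (hπ1 : π ≤ 1)
    (h : Real.toNNReal π ≤ 1) (k j : ℕ) :
    ((PMF.binomial (Real.toNNReal π) h k).map Fin.val).toMeasure {j}
      = ENNReal.ofReal ((k.choose j : ℝ) * π ^ j * (1 - π) ^ (k - j)) := by
  have hs : (0:ℝ) ≤ 1 - π := by linarith
  rw [PMF.toMeasure_apply_singleton _ _ (measurableSet_singleton j), PMF.map_apply]
  by_cases hjk : j ≤ k
  · rw [tsum_eq_single (⟨j, by omega⟩ : Fin (k + 1))]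
    · rw [if_pos rfl, PMF.binomial_apply]
      have h2 : ((Real.toNNReal π : NNReal) : ENNReal) = ENNReal.ofReal π := rfl
      push_cast
      rw [h2]
      have h1 : (1 : ENNReal) - ENNReal.ofReal π = ENNReal.ofReal (1 - π) := by
        rw [ENNReal.ofReal_sub _ hπ0, ENNReal.ofReal_one]
      rw [h1]
      rw [← ENNReal.ofReal_pow hπ0, ← ENNReal.ofReal_pow hs,
        ← ENNReal.ofReal_natCast (k.choose j),
        ← ENNReal.ofReal_mul (by positivity), ← ENNReal.ofReal_mul (by positivity)]
      congr 1
      ring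
    · intro b hb
      rw [if_neg]
      intro hc
      exact hb (Fin.ext hc.symm)
  · have h0 : (k.choose j : ℝ) = 0 := by
      rw [Nat.choose_eq_zero_of_lt (by omega)]; simp
    rw [h0]
    simp only [zero_mul, ENNReal.ofReal_zero]
    convert tsum_zero with a
    rw [if_neg]
    omega


/-- **Conditional subsample distributions and their likelihood ratio.**
Each entry of a database of size `n` is independently positive with probability `π`;
a subsample of size `m` is drawn (in the binomial model), where the critical entry is
included with probability `λ = m/n`.  Conditioned on the critical entry being positive
(resp. negative), the number of positive elements in the subsample is distributed as the
mixture `μ₊ = λ·(1 + Bin(m−1,π)) + (1−λ)·Bin(m,π)` (resp.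
`μ₋ = λ·Bin(m−1,π) + (1−λ)·Bin(m,π)`).  Then, with `ξ = π/(1−π)`,
`P[a_{F,m} = j/m ∣ μ₊] = λ·C(m−1,j−1)·π^{j−1}(1−π)^{m−j} + (1−λ)·C(m,j)·π^j(1−π)^{m−j}`
(for `1 ≤ j ≤ m`),
`P[a_{F,m} = j/m ∣ μ₋] = λ·C(m−1,j)·π^j(1−π)^{m−j−1} + (1−λ)·C(m,j)·π^j(1−π)^{m−j}`,
and the ratio of the two probabilities equals
`Q₊(j) = (λ·j + (1−λ)·m·π) / (λ·(m−j)·ξ + (1−λ)·m·π)`. -/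
theorem subsample_conditional_distributions_and_ratio
    (n m : ℕ) (hm : 0 < m) (hmn : m ≤ n) (π : ℝ) (hπ0 : 0 < π) (hπ1 : π < 1) :
    let lam : ℝ := (m : ℝ) / n
    let ξ : ℝ := π / (1 - π)
    let binom : ℕ → Measure ℕ := fun k =>
      ((PMF.binomial (Real.toNNReal π)
          (show Real.toNNReal π ≤ 1 from Real.toNNReal_le_one.mpr hπ1.le) k).map
        Fin.val).toMeasure
    let μp : Measure ℕ :=
      ENNReal.ofReal lam • ((binom (m - 1)).map (· + 1))
        + ENNReal.ofReal (1 - lam) • binom m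
    let μm : Measure ℕ :=
      ENNReal.ofReal lam • binom (m - 1) + ENNReal.ofReal (1 - lam) • binom m
    (∀ j : ℕ, 1 ≤ j → j ≤ m →
        μp {j} = ENNReal.ofReal (lam * ((m - 1).choose (j - 1) : ℝ) * π ^ (j - 1)
            * (1 - π) ^ (m - j)
          + (1 - lam) * (m.choose j : ℝ) * π ^ j * (1 - π) ^ (m - j)))
    ∧ (∀ j : ℕ, j ≤ m →
        μm {j} = ENNReal.ofReal (lam * ((m - 1).choose j : ℝ) * π ^ j
            * (1 - π) ^ (m - j - 1)
          + (1 - lam) * (m.choose j : ℝ) * π ^ j * (1 - π) ^ (m - j)))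
    ∧ (∀ j : ℕ, j ≤ m →
        (μp {j}).toReal / (μm {j}).toReal
          = (lam * j + (1 - lam) * m * π) / (lam * ((m : ℝ) - j) * ξ + (1 - lam) * m * π)) := by
  intro lam ξ binom μp μm
  have hn : 0 < n := lt_of_lt_of_le hm hmn
  have hlam0 : 0 ≤ lam := by positivity
  have hlam1 : lam ≤ 1 := by
    apply div_le_one_of_le₀ <;> [exact_mod_cast Nat.cast_le.mpr hmn; positivity]
  have hs : (0:ℝ) ≤ 1 - π := by linarith
  have hb : ∀ k j : ℕ, binom k {j}
      = ENNReal.ofReal ((k.choose j : ℝ) * π ^ j * (1 - π) ^ (k - j)) :=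
    fun k j => binom_map_singleton π hπ0.le hπ1.le _ k j
  have hmeas : Measurable (fun x : ℕ => x + 1) := measurable_from_top
  have hmap : ∀ j : ℕ, ((binom (m - 1)).map (· + 1)) {j}
      = if j = 0 then 0 else binom (m - 1) {j - 1} := by
    intro j
    rw [Measure.map_apply hmeas (measurableSet_singleton j)]
    by_cases hj : j = 0
    · subst hj
      rw [if_pos rfl]
      have : (fun x : ℕ => x + 1) ⁻¹' {0} = (∅ : Set ℕ) := by ext x; simp
      rw [this]
      exact measure_empty
    · rw [if_neg hj]
      congr 1
      ext x
      simp only [Set.mem_preimage, Set.mem_singleton_iff]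
      omega
  -- part 1
  have part1 : ∀ j : ℕ, 1 ≤ j → j ≤ m →
      μp {j} = ENNReal.ofReal (lam * ((m - 1).choose (j - 1) : ℝ) * π ^ (j - 1)
          * (1 - π) ^ (m - j)
        + (1 - lam) * (m.choose j : ℝ) * π ^ j * (1 - π) ^ (m - j)) := by
    intro j h1 h2
    have hμp : μp = ENNReal.ofReal lam • ((binom (m - 1)).map (· + 1))
        + ENNReal.ofReal (1 - lam) • binom m := rfl
    rw [hμp]
    rw [Measure.add_apply, Measure.smul_apply, Measure.smul_apply, smul_eq_mul,
      smul_eq_mul, hmap j, if_neg (by omega), hb, hb]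
    have he : m - 1 - (j - 1) = m - j := by omega
    rw [he, ← ENNReal.ofReal_mul hlam0, ← ENNReal.ofReal_mul (by linarith),
      ← ENNReal.ofReal_add
        (mul_nonneg hlam0 (mul_nonneg (mul_nonneg (Nat.cast_nonneg _) (pow_nonneg hπ0.le _)) (pow_nonneg hs _)))
        (mul_nonneg (by linarith) (mul_nonneg (mul_nonneg (Nat.cast_nonneg _) (pow_nonneg hπ0.le _)) (pow_nonneg hs _)))]
    congr 1
    ring
  -- part 2
  have part2 : ∀ j : ℕ, j ≤ m →
      μm {j} = ENNReal.ofReal (lam * ((m - 1).choose j : ℝ) * π ^ j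
          * (1 - π) ^ (m - j - 1)
        + (1 - lam) * (m.choose j : ℝ) * π ^ j * (1 - π) ^ (m - j)) := by
    intro j h2
    have hμm : μm = ENNReal.ofReal lam • binom (m - 1)
        + ENNReal.ofReal (1 - lam) • binom m := rfl
    rw [hμm]
    rw [Measure.add_apply, Measure.smul_apply, Measure.smul_apply, smul_eq_mul,
      smul_eq_mul, hb, hb]
    have he : m - 1 - j = m - j - 1 := by omega
    rw [he, ← ENNReal.ofReal_mul hlam0, ← ENNReal.ofReal_mul (by linarith),
      ← ENNReal.ofReal_add
        (mul_nonneg hlam0 (mul_nonneg (mul_nonneg (Nat.cast_nonneg _) (pow_nonneg hπ0.le _)) (pow_nonneg hs _)))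
        (mul_nonneg (by linarith) (mul_nonneg (mul_nonneg (Nat.cast_nonneg _) (pow_nonneg hπ0.le _)) (pow_nonneg hs _)))]
    congr 1
    ring
  refine ⟨part1, part2, ?_⟩
  intro j hjm
  have h1l : (0:ℝ) ≤ 1 - lam := by linarith
  have hmR : (0:ℝ) < m := by exact_mod_cast hm
  have hξ : ξ = π / (1 - π) := rfl
  have hsπ : (0:ℝ) < 1 - π := by linarith
  have hξ0 : 0 ≤ ξ := by rw [hξ]; positivity
  have hjR : (j:ℝ) ≤ m := by exact_mod_cast hjm
  by_cases hj0 : j = 0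
  · subst hj0
    have hμp : μp = ENNReal.ofReal lam • ((binom (m - 1)).map (· + 1))
        + ENNReal.ofReal (1 - lam) • binom m := rfl
    have hp0 : (μp {0}).toReal = (1 - lam) * (1 - π) ^ m := by
      rw [hμp, Measure.add_apply, Measure.smul_apply, Measure.smul_apply, smul_eq_mul,
        smul_eq_mul, hmap 0, if_pos rfl, mul_zero, zero_add, hb,
        ← ENNReal.ofReal_mul h1l, ENNReal.toReal_ofReal (by positivity)]
      simp
    have hm0 : (μm {0}).toReal = lam * (1 - π) ^ (m - 1) + (1 - lam) * (1 - π) ^ m := by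
      rw [part2 0 (by omega), ENNReal.toReal_ofReal (by positivity)]
      simp
    rw [hp0, hm0]
    simp only [Nat.cast_zero, mul_zero, zero_add, sub_zero]
    by_cases hl1 : lam = 1
    · rw [hl1]
      norm_num
    · have hl1' : lam < 1 := lt_of_le_of_ne hlam1 hl1
      have hDl : 0 < lam * (1 - π) ^ (m - 1) + (1 - lam) * (1 - π) ^ m := by
        have h1 : 0 < (1 - lam) * (1 - π) ^ m := mul_pos (by linarith) (pow_pos hsπ _)
        have h2 : 0 ≤ lam * (1 - π) ^ (m - 1) := mul_nonneg hlam0 (pow_nonneg hs _)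
        linarith
      have hDr : 0 < lam * (m:ℝ) * ξ + (1 - lam) * m * π := by
        have h1 : 0 < (1 - lam) * (m:ℝ) * π := mul_pos (mul_pos (by linarith) hmR) hπ0
        have h2 : 0 ≤ lam * (m:ℝ) * ξ := mul_nonneg (mul_nonneg hlam0 hmR.le) hξ0
        linarith
      rw [div_eq_div_iff hDl.ne' hDr.ne', hξ]
      have hq : (1 - π) ^ m = (1 - π) ^ (m - 1) * (1 - π) := by
        rw [← pow_succ]; congr 1; omega
      rw [hq]
      field_simp
  · have h1j : 1 ≤ j := by omega
    rw [part1 j h1j hjm, part2 j hjm]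
    set c1 : ℝ := (((m - 1).choose (j - 1) : ℕ) : ℝ) with hc1def
    set c2 : ℝ := (((m - 1).choose j : ℕ) : ℝ) with hc2def
    set c : ℝ := ((m.choose j : ℕ) : ℝ) with hcdef
    have hc1nn : 0 ≤ c1 := Nat.cast_nonneg _
    have hc2nn : 0 ≤ c2 := Nat.cast_nonneg _
    have hcnn : 0 ≤ c := Nat.cast_nonneg _
    have hN0 : (0:ℝ) ≤ lam * c1 * π ^ (j-1) * (1-π) ^ (m-j)
        + (1 - lam) * c * π ^ j * (1-π) ^ (m-j) := by positivity
    have hD0 : (0:ℝ) ≤ lam * c2 * π ^ j * (1-π) ^ (m-j-1)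
        + (1 - lam) * c * π ^ j * (1-π) ^ (m-j) := by positivity
    rw [ENNReal.toReal_ofReal hN0, ENNReal.toReal_ofReal hD0]
    by_cases hcrit : lam = 1 ∧ j = m
    · obtain ⟨hl1, hjem⟩ := hcrit
      have hz : c2 = 0 := by
        rw [hc2def, Nat.choose_eq_zero_of_lt (by omega)]; simp
      have hjmR : (j:ℝ) = m := by exact_mod_cast hjem
      have hDz : lam * c2 * π ^ j * (1-π) ^ (m-j-1)
          + (1 - lam) * c * π ^ j * (1-π) ^ (m-j) = 0 := by
        rw [hz, hl1]; ring
      have hDrz : lam * ((m:ℝ) - j) * ξ + (1 - lam) * (m:ℝ) * π = 0 := by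
        rw [hl1, hjmR]; ring
      rw [hDz, hDrz, div_zero, div_zero]
    · have hD : 0 < lam * c2 * π ^ j * (1-π) ^ (m-j-1)
          + (1 - lam) * c * π ^ j * (1-π) ^ (m-j) := by
        by_cases hl1 : lam = 1
        · have hjltm : j < m := by
            rcases Nat.lt_or_ge j m with h | h
            · exact h
            · exact absurd ⟨hl1, by omega⟩ hcrit
          have hc2pos : (0:ℝ) < c2 := by
            rw [hc2def]
            exact_mod_cast Nat.choose_pos (by omega : j ≤ m - 1)
          have h1 : 0 < lam * c2 * π ^ j * (1-π) ^ (m-j-1) := by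
            rw [hl1]
            exact mul_pos (mul_pos (mul_pos one_pos hc2pos) (pow_pos hπ0 _)) (pow_pos hsπ _)
          have h2 : 0 ≤ (1 - lam) * c * π ^ j * (1-π) ^ (m-j) :=
            mul_nonneg (mul_nonneg (mul_nonneg h1l hcnn) (pow_nonneg hπ0.le _)) (pow_nonneg hs _)
          linarith
        · have hl1' : lam < 1 := lt_of_le_of_ne hlam1 hl1
          have hcpos : (0:ℝ) < c := by
            rw [hcdef]; exact_mod_cast Nat.choose_pos hjm
          have h1 : 0 < (1 - lam) * c * π ^ j * (1-π) ^ (m-j) :=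
            mul_pos (mul_pos (mul_pos (by linarith) hcpos) (pow_pos hπ0 _)) (pow_pos hsπ _)
          have h2 : 0 ≤ lam * c2 * π ^ j * (1-π) ^ (m-j-1) :=
            mul_nonneg (mul_nonneg (mul_nonneg hlam0 hc2nn) (pow_nonneg hπ0.le _)) (pow_nonneg hs _)
          linarith
      have hDr : 0 < lam * ((m:ℝ) - j) * ξ + (1 - lam) * m * π := by
        have hmj0 : (0:ℝ) ≤ (m:ℝ) - j := by linarith
        by_cases hl1 : lam = 1
        · have hjltm : j < m := by
            rcases Nat.lt_or_ge j m with h | h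
            · exact h
            · exact absurd ⟨hl1, by omega⟩ hcrit
          have hmj : (0:ℝ) < (m:ℝ) - j := by
            have : (j:ℝ) < m := by exact_mod_cast hjltm
            linarith
          have hξpos : 0 < ξ := by rw [hξ]; positivity
          have h1 : 0 < lam * ((m:ℝ) - j) * ξ := by
            rw [hl1]; exact mul_pos (mul_pos one_pos hmj) hξpos
          have h2 : 0 ≤ (1 - lam) * (m:ℝ) * π :=
            mul_nonneg (mul_nonneg h1l hmR.le) hπ0.le
          linarith
        · have hl1' : lam < 1 := lt_of_le_of_ne hlam1 hl1
          have h1 : 0 < (1 - lam) * (m:ℝ) * π := mul_pos (mul_pos (by linarith) hmR) hπ0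
          have h2 : 0 ≤ lam * ((m:ℝ) - j) * ξ := mul_nonneg (mul_nonneg hlam0 hmj0) hξ0
          linarith
      rw [div_eq_div_iff hD.ne' hDr.ne', hξ]
      have hp : π ^ j = π ^ (j - 1) * π := by
        rw [← pow_succ]; congr 1; omega
      by_cases hjem : j = m
      · subst hjem
        have hc1one : c1 = 1 := by rw [hc1def, Nat.choose_self]; norm_num
        have hcone : c = 1 := by rw [hcdef, Nat.choose_self]; norm_num
        have hz : c2 = 0 := by
          rw [hc2def, Nat.choose_eq_zero_of_lt (by omega)]; simp
        rw [hc1one, hcone, hz]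
        simp only [Nat.sub_self, pow_zero]
        rw [hp]
        ring
      · have n1 : m * ((m - 1).choose (j - 1)) = m.choose j * j := by
          have h := Nat.add_one_mul_choose_eq (m - 1) (j - 1)
          rw [show m - 1 + 1 = m from by omega, show j - 1 + 1 = j from by omega] at h
          exact h
        have n2 : (m - 1).choose j * m = m.choose j * (m - j) := by
          have h := Nat.choose_mul_succ_eq (m - 1) j
          rwa [show m - 1 + 1 = m from by omega] at h
        have hc1R : (m:ℝ) * c1 = c * j := by
          rw [hc1def, hcdef]
          exact_mod_cast n1
        have hc2R : c2 * (m:ℝ) = c * ((m:ℝ) - j) := by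
          have h : c2 * (m:ℝ) = c * ((m - j : ℕ) : ℝ) := by
            rw [hc2def, hcdef]; exact_mod_cast n2
          rwa [Nat.cast_sub hjm] at h
        have hc1' : c1 = (j:ℝ) * c / m := by
          field_simp
          linarith [hc1R]
        have hc2' : c2 = ((m:ℝ) - j) * c / m := by
          field_simp
          linarith [hc2R]
        have hq : (1 - π) ^ (m - j) = (1 - π) ^ (m - j - 1) * (1 - π) := by
          rw [← pow_succ]; congr 1; omega
        rw [hc1', hc2', hp, hq]
        field_simp
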